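/- Suppose (M_0, M_1, ..., M_k) is a sequence of finitely generated F[U]-modules in which consecutive terms have similar skylines, M_0 contains a direct summand F[U]/U^N with N ≥ 1, and M_k ≅ F[U] is free of rank one. Then the direct sum ⊕_{t=0}^{k} M_t contains a direct summand isomorphic to F[U]/U^N ⊕ F[U]/U^{N−1} ⊕ ... ⊕ F[U]/U. -/

import Mathlib

open Polynomial

noncomputable section
abbrev FU := Polynomial (ZMod 2)

abbrev Skyline (n m : ℕ) (h : Fin m → ℕ) :=
  (Fin n → FU) × ((j : Fin m) → FU ⧸ Ideal.span {(X : FU) ^ h j})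

def SimilarSkylines (A B : Type) [AddCommGroup A] [Module FU A]
    [AddCommGroup B] [Module FU B] : Prop :=
  ∃ (n m : ℕ) (h h' : Fin m → ℕ) (k : ℕ),
    (∀ j, 0 < h j) ∧ (∀ j, |(h' j : ℤ) - (h j : ℤ)| ≤ 1) ∧
    Nonempty (A ≃ₗ[FU] Skyline n m h) ∧
    Nonempty (B ≃ₗ[FU] (Skyline n m h' × (Fin k → FU ⧸ Ideal.span {(X : FU)})))

def HasSummandIso (M : Type) [AddCommGroup M] [Module FU M]
    (S : Type) [AddCommGroup S] [Module FU S] : Prop :=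
  ∃ (N P : Submodule FU M), IsCompl N P ∧ Nonempty (N ≃ₗ[FU] S)

namespace Stmt17Aux

/-- `Q s M` means that `M` has a torsion element of "height at least `s+1`":
an element killed by `X`, divisible by `X^s`, and nonzero. -/
def Q (s : ℕ) (M : Type) [AddCommGroup M] [Module FU M] : Prop :=
  ∃ x y : M, x ≠ 0 ∧ (X : FU) • x = 0 ∧ (X : FU) ^ s • y = x

lemma Q_congr {A B : Type} [AddCommGroup A] [Module FU A] [AddCommGroup B] [Module FU B]
    (e : A ≃ₗ[FU] B) {s : ℕ} (h : Q s A) : Q s B := by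
  obtain ⟨x, y, hx0, hxX, hxy⟩ := h
  exact ⟨e x, e y, by simpa using hx0, by rw [← map_smul, hxX, map_zero],
    by rw [← map_smul, hxy]⟩

lemma Q_mono {M : Type} [AddCommGroup M] [Module FU M] {s s' : ℕ} (hss : s ≤ s')
    (h : Q s' M) : Q s M := by
  obtain ⟨x, y, hx0, hxX, hxy⟩ := h
  exact ⟨x, (X : FU) ^ (s' - s) • y, hx0, hxX,
    by rw [smul_smul, ← pow_add, Nat.add_sub_cancel' hss, hxy]⟩

lemma Q_submodule {M : Type} [AddCommGroup M] [Module FU M] {p : Submodule FU M} {s : ℕ}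
    (h : Q s p) : Q s M := by
  obtain ⟨x, y, hx0, hxX, hxy⟩ := h
  refine ⟨(x : M), (y : M), by simpa using hx0, ?_, ?_⟩
  · rw [← Submodule.coe_smul, hxX, Submodule.coe_zero]
  · rw [← Submodule.coe_smul, hxy]

lemma Q_prod {A B : Type} [AddCommGroup A] [Module FU A] [AddCommGroup B] [Module FU B]
    {s : ℕ} : Q s (A × B) ↔ Q s A ∨ Q s B := by
  constructor
  · rintro ⟨⟨x1, x2⟩, ⟨y1, y2⟩, hx0, hxX, hxy⟩
    rw [Prod.ext_iff] at hxX hxy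
    by_cases h1 : x1 = 0
    · refine Or.inr ⟨x2, y2, fun h => hx0 (by simp [Prod.ext_iff, h1, h]), hxX.2, hxy.2⟩
    · exact Or.inl ⟨x1, y1, h1, hxX.1, hxy.1⟩
  · rintro (⟨x, y, hx0, hxX, hxy⟩ | ⟨x, y, hx0, hxX, hxy⟩)
    · exact ⟨(x, 0), (y, 0), by simp [Prod.ext_iff, hx0],
        by simp [Prod.ext_iff, hxX], by simp [Prod.ext_iff, hxy]⟩
    · exact ⟨(0, x), (0, y), by simp [Prod.ext_iff, hx0],
        by simp [Prod.ext_iff, hxX], by simp [Prod.ext_iff, hxy]⟩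

lemma Q_pi {ι : Type} [DecidableEq ι] {C : ι → Type} [∀ i, AddCommGroup (C i)]
    [∀ i, Module FU (C i)] {s : ℕ} : Q s (∀ i, C i) ↔ ∃ i, Q s (C i) := by
  constructor
  · rintro ⟨x, y, hx0, hxX, hxy⟩
    have : ∃ i, x i ≠ 0 := by
      by_contra hc; push_neg at hc; exact hx0 (funext hc)
    obtain ⟨i, hi⟩ := this
    exact ⟨i, x i, y i, hi, congrFun hxX i, congrFun hxy i⟩
  · rintro ⟨i, x, y, hx0, hxX, hxy⟩
    refine ⟨Pi.single i x, Pi.single i y, fun h => hx0 ?_, ?_, ?_⟩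
    · simpa using congrFun h i
    · funext j
      by_cases hj : j = i
      · subst hj; simpa using hxX
      · simp [Pi.single_eq_of_ne hj]
    · funext j
      by_cases hj : j = i
      · subst hj; simpa using hxy
      · simp [Pi.single_eq_of_ne hj]

lemma smul_mk {I : Ideal FU} (r p : FU) :
    r • Ideal.Quotient.mk I p = Ideal.Quotient.mk I (r * p) := rfl

lemma Q_quot {s h : ℕ} : Q s (FU ⧸ Ideal.span {(X : FU) ^ h}) ↔ s < h := by
  constructor
  · rintro ⟨x, y, hx0, hxX, hxy⟩
    obtain ⟨p, rfl⟩ := Ideal.Quotient.mk_surjective x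
    obtain ⟨q, rfl⟩ := Ideal.Quotient.mk_surjective y
    by_contra hc
    push_neg at hc
    apply hx0
    rw [Ideal.Quotient.eq_zero_iff_mem, Ideal.mem_span_singleton]
    rw [smul_mk] at hxX hxy
    have h1 : (X : FU) ^ h ∣ X * p := by
      rw [← Ideal.mem_span_singleton, ← Ideal.Quotient.eq_zero_iff_mem]
      exact hxX
    have h2 : (X : FU) ^ h ∣ X ^ s * q - p := by
      rw [← Ideal.mem_span_singleton, ← Ideal.Quotient.eq_zero_iff_mem, map_sub,
        sub_eq_zero]
      exact hxy
    have h3 : (X : FU) ^ h ∣ X ^ s * q := dvd_mul_of_dvd_left (pow_dvd_pow X hc) q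
    simpa using dvd_sub h3 h2
  · intro hsh
    refine ⟨Ideal.Quotient.mk _ ((X : FU) ^ (h - 1)),
      Ideal.Quotient.mk _ ((X : FU) ^ (h - 1 - s)), ?_, ?_, ?_⟩
    · rw [Ne, Ideal.Quotient.eq_zero_iff_mem, Ideal.mem_span_singleton]
      intro hd
      have := (pow_dvd_pow_iff X_ne_zero not_isUnit_X).mp hd
      omega
    · rw [smul_mk, ← pow_succ', Nat.sub_add_cancel (by omega),
        Ideal.Quotient.eq_zero_iff_mem]
      exact Ideal.mem_span_singleton_self _
    · rw [smul_mk, ← pow_add, Nat.add_sub_cancel' (by omega : s ≤ h - 1)]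

lemma Q_free {s : ℕ} : ¬ Q s FU := by
  rintro ⟨x, y, hx0, hxX, -⟩
  rw [smul_eq_mul] at hxX
  rcases mul_eq_zero.mp hxX with h | h
  · exact X_ne_zero h
  · exact hx0 h

lemma Q_skyline {n m : ℕ} {h : Fin m → ℕ} {s : ℕ} :
    Q s (Skyline n m h) ↔ ∃ j, s < h j := by
  rw [show Q s (Skyline n m h) ↔ _ from Q_prod, Q_pi, Q_pi]
  simp [Q_free, Q_quot]

lemma hasSummandIso_congr {A B S : Type} [AddCommGroup A] [Module FU A]
    [AddCommGroup B] [Module FU B] [AddCommGroup S] [Module FU S]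
    (e : A ≃ₗ[FU] B) (h : HasSummandIso A S) : HasSummandIso B S := by
  obtain ⟨N, P, hc, ⟨f⟩⟩ := h
  refine ⟨N.map (e : A →ₗ[FU] B), P.map (e : A →ₗ[FU] B),
    (Submodule.orderIsoMapComap e).isCompl hc,
    ⟨((Submodule.equivMapOfInjective (e : A →ₗ[FU] B) e.injective N).symm.trans f)⟩⟩

lemma hasSummandIso_trans {A S S' : Type} [AddCommGroup A] [Module FU A]
    [AddCommGroup S] [Module FU S] [AddCommGroup S'] [Module FU S']
    (h : HasSummandIso A S) (e : S ≃ₗ[FU] S') : HasSummandIso A S' := by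
  obtain ⟨N, P, hc, ⟨f⟩⟩ := h
  exact ⟨N, P, hc, ⟨f.trans e⟩⟩

lemma hasSummandIso_prod_right {A B S : Type} [AddCommGroup A] [Module FU A]
    [AddCommGroup B] [Module FU B] [AddCommGroup S] [Module FU S]
    (h : HasSummandIso B S) : HasSummandIso (A × B) S := by
  obtain ⟨N, P, hc, ⟨f⟩⟩ := h
  refine ⟨N.map (LinearMap.inr FU A B), Submodule.comap (LinearMap.snd FU A B) P,
    ⟨?_, ?_⟩, ⟨((Submodule.equivMapOfInjective _ LinearMap.inr_injective N).symm.trans f)⟩⟩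
  · rw [Submodule.disjoint_def]
    rintro ⟨a, b⟩ hab1 hab2
    obtain ⟨n, hn, heq⟩ := hab1
    rw [LinearMap.inr_apply] at heq
    obtain ⟨h1, h2⟩ := Prod.mk.inj heq
    have hbP : b ∈ P := hab2
    have hb0 : b = 0 := Submodule.disjoint_def.mp hc.disjoint b (h2 ▸ hn) hbP
    exact Prod.ext_iff.mpr ⟨h1.symm, hb0⟩
  · rw [codisjoint_iff, eq_top_iff]
    rintro ⟨a, b⟩ -
    obtain ⟨y, z, hy, hz, hyz⟩ := Submodule.codisjoint_iff_exists_add_eq.mp hc.codisjoint b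
    refine Submodule.mem_sup.mpr ⟨(0, y), ⟨y, hy, rfl⟩, (a, z), hz, ?_⟩
    simp [Prod.ext_iff, hyz]

lemma hasSummandIso_pi_component {ι : Type} [DecidableEq ι] (C : ι → Type)
    [∀ i, AddCommGroup (C i)] [∀ i, Module FU (C i)] (j : ι) :
    HasSummandIso (∀ i, C i) (C j) := by
  have hinj : Function.Injective (LinearMap.single FU C j) := fun a b hab => by
    simpa using congrFun hab j
  refine ⟨LinearMap.range (LinearMap.single FU C j), LinearMap.ker (LinearMap.proj j),
    ⟨?_, ?_⟩, ⟨(LinearEquiv.ofInjective _ hinj).symm⟩⟩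
  · rw [Submodule.disjoint_def]
    rintro x ⟨c, rfl⟩ hk
    have : c = 0 := by simpa using hk
    simp [this]
  · rw [codisjoint_iff, eq_top_iff]
    rintro x -
    refine Submodule.mem_sup.mpr ⟨Pi.single j (x j), ⟨x j, rfl⟩,
      x - Pi.single j (x j), ?_, by abel⟩
    simp [LinearMap.mem_ker]

lemma sub_proj_mem {E : Type} [AddCommGroup E] [Module FU E] {p q : Submodule FU E}
    (h : IsCompl p q) (x : E) :
    x - (Submodule.projectionOnto p q h x : E) ∈ q := by
  obtain ⟨y, z, hy, hz, hyz⟩ := Submodule.codisjoint_iff_exists_add_eq.mp h.codisjoint x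
  subst hyz
  have hproj : Submodule.projectionOnto p q h (y + z) = ⟨y, hy⟩ := by
    rw [map_add, Submodule.projectionOnto_apply_of_mem_right h hz, add_zero]
    exact Submodule.projectionOnto_apply_left h ⟨y, hy⟩
  rw [hproj]
  simpa using hz

lemma hasSummandIso_pi {ι ι' : Type} [Fintype ι'] [DecidableEq ι]
    (C : ι → Type) [∀ t, AddCommGroup (C t)] [∀ t, Module FU (C t)]
    (S : ι' → Type) [∀ s, AddCommGroup (S s)] [∀ s, Module FU (S s)]
    (τ : ι' → ι) (hτ : Function.Injective τ)
    (hall : ∀ s, HasSummandIso (C (τ s)) (S s)) :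
    HasSummandIso (∀ t, C t) (∀ s, S s) := by
  choose N P hc hne using hall
  let e : ∀ s, (N s) ≃ₗ[FU] S s := fun s => (hne s).some
  let ν : ∀ s, S s →ₗ[FU] C (τ s) := fun s =>
    (N s).subtype.comp (e s).symm.toLinearMap
  have hνmem : ∀ s x, ν s x ∈ N s := fun s x => SetLike.coe_mem _
  have hν : ∀ s, Function.Injective (ν s) := fun s =>
    (N s).injective_subtype.comp (e s).symm.injective
  let Ψ : (∀ s, S s) →ₗ[FU] (∀ t, C t) :=
    ∑ s : ι', (LinearMap.single FU C (τ s)).comp ((ν s).comp (LinearMap.proj s))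
  have hΨap : ∀ g s, Ψ g (τ s) = ν s (g s) := by
    intro g s
    have hexp : Ψ g (τ s) = ∑ s' : ι', Pi.single (τ s') (ν s' (g s')) (τ s) := by
      simp [Ψ, LinearMap.sum_apply, Finset.sum_apply, LinearMap.coe_comp,
        Function.comp, LinearMap.coe_single, LinearMap.proj_apply]
    rw [hexp, Finset.sum_eq_single s]
    · simp
    · intro b _ hb
      exact Pi.single_eq_of_ne (fun hh => hb (hτ hh).symm) _
    · intro hs; exact absurd (Finset.mem_univ s) hs
  have hΨinj : Function.Injective Ψ := by
    intro g g' hgg'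
    funext s
    exact hν s (by rw [← hΨap g s, ← hΨap g' s, hgg'])
  refine ⟨LinearMap.range Ψ, ⨅ s, Submodule.comap (LinearMap.proj (τ s)) (P s),
    ⟨?_, ?_⟩, ⟨(LinearEquiv.ofInjective Ψ hΨinj).symm⟩⟩
  · rw [Submodule.disjoint_def]
    rintro x ⟨g, rfl⟩ hxB
    have hg : ∀ s, g s = 0 := by
      intro s
      have h1 : ν s (g s) ∈ P s := by
        have := (Submodule.mem_iInf _).mp hxB s
        rwa [Submodule.mem_comap, LinearMap.proj_apply, hΨap] at this
      have h0 : ν s (g s) = 0 :=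
        (Submodule.disjoint_def.mp (hc s).disjoint) _ (hνmem s (g s)) h1
      exact hν s (by rw [h0, map_zero])
    have : g = 0 := funext hg
    rw [this, map_zero]
  · rw [codisjoint_iff, eq_top_iff]
    rintro x -
    let g : ∀ s, S s := fun s =>
      e s (Submodule.linearProjOfIsCompl (N s) (P s) (hc s) (x (τ s)))
    refine Submodule.mem_sup.mpr ⟨Ψ g, ⟨g, rfl⟩, x - Ψ g, ?_, by abel⟩
    refine (Submodule.mem_iInf _).mpr fun s => ?_
    rw [Submodule.mem_comap, LinearMap.proj_apply, Pi.sub_apply, hΨap]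
    have hg : ν s (g s) =
        (Submodule.linearProjOfIsCompl (N s) (P s) (hc s) (x (τ s)) : C (τ s)) := by
      simp [ν, g]
    rw [hg]
    exact sub_proj_mem (hc s) _

end Stmt17Aux

open Stmt17Aux

/-- If (M₀, …, M_k) is a sequence of finitely generated F[U]-modules in which
consecutive terms have similar skylines, M₀ contains an F[U]/U^N summand
(N ≥ 1), and M_k ≅ F[U], then ⊕_{t=0}^k M_t contains a direct summand
isomorphic to F[U]/U^N ⊕ F[U]/U^{N−1} ⊕ ⋯ ⊕ F[U]/U. -/
theorem stmt17 (k N : ℕ) (hN : 1 ≤ N) (M : ℕ → Type)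
    [∀ t, AddCommGroup (M t)] [∀ t, Module FU (M t)] [∀ t, Module.Finite FU (M t)]
    (hsim : ∀ t, t < k → SimilarSkylines (M t) (M (t + 1)))
    (hfree : Nonempty (M k ≃ₗ[FU] FU))
    (hsum : HasSummandIso (M 0) (FU ⧸ Ideal.span {(X : FU) ^ N})) :
    HasSummandIso ((t : Fin (k + 1)) → M t)
      ((i : Fin N) → FU ⧸ Ideal.span {(X : FU) ^ ((i : ℕ) + 1)}) := by
  classical
  have hQ0 : Q (N - 1) (M 0) := by
    obtain ⟨N0, P0, hc, ⟨f⟩⟩ := hsum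
    exact Q_submodule (Q_congr f.symm (Q_quot.mpr (by omega)))
  have hQk : ∀ s, ¬ Q s (M k) := fun s hq => Q_free (Q_congr hfree.some hq)
  have hstep : ∀ t, t < k → ∀ s, Q (s + 1) (M t) → Q s (M (t + 1)) := by
    intro t ht s hq
    obtain ⟨n, m, h, h', k', hpos, hcl, ⟨eA⟩, ⟨eB⟩⟩ := hsim t ht
    obtain ⟨j, hj⟩ := Q_skyline.mp (Q_congr eA hq)
    have hj' : s < h' j := by
      have := hcl j; rw [abs_le] at this; omega
    exact Q_congr eB.symm (Q_prod.mpr (Or.inl (Q_skyline.mpr ⟨j, hj'⟩)))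
  have hexact : ∀ t, t < k → ∀ s, Q s (M t) → ¬ Q s (M (t + 1)) →
      HasSummandIso (M t) (FU ⧸ Ideal.span {(X : FU) ^ (s + 1)}) := by
    intro t ht s hq hnq
    obtain ⟨n, m, h, h', k', hpos, hcl, ⟨eA⟩, ⟨eB⟩⟩ := hsim t ht
    obtain ⟨j, hj⟩ := Q_skyline.mp (Q_congr eA hq)
    have hj' : ¬ s < h' j := fun hcon =>
      hnq (Q_congr eB.symm (Q_prod.mpr (Or.inl (Q_skyline.mpr ⟨j, hcon⟩))))
    have hh : h j = s + 1 := by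
      have := hcl j; rw [abs_le] at this; omega
    have hsky : HasSummandIso (Skyline n m h) (FU ⧸ Ideal.span {(X : FU) ^ (h j)}) :=
      hasSummandIso_prod_right (hasSummandIso_pi_component _ j)
    rw [hh] at hsky
    exact hasSummandIso_congr eA.symm hsky
  set T : ℕ → ℕ := fun s => Nat.findGreatest (fun t => Q s (M t)) k with hTdef
  have hTQ : ∀ s, s ≤ N - 1 → Q s (M (T s)) := fun s hs =>
    Nat.findGreatest_spec (P := fun t => Q s (M t)) (Nat.zero_le k) (Q_mono hs hQ0)
  have hTk : ∀ s, s ≤ N - 1 → T s < k := by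
    intro s hs
    have h1 : T s ≤ k := Nat.findGreatest_le k
    rcases lt_or_eq_of_le h1 with h2 | h2
    · exact h2
    · exact absurd (h2 ▸ hTQ s hs) (hQk s)
  have hTnot : ∀ s, s ≤ N - 1 → ¬ Q s (M (T s + 1)) := fun s hs =>
    Nat.findGreatest_is_greatest (P := fun t => Q s (M t)) (Nat.lt_succ_self _)
      (by have := hTk s hs; omega)
  have hTlt : ∀ s s', s < s' → s' ≤ N - 1 → T s' < T s := by
    intro s s' hss hs'
    have h1 : Q s (M (T s' + 1)) :=
      hstep (T s') (hTk s' hs') s (Q_mono (by omega) (hTQ s' hs'))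
    have h2 : T s' + 1 ≤ T s :=
      Nat.le_findGreatest (P := fun t => Q s (M t)) (by have := hTk s' hs'; omega) h1
    omega
  let τ : Fin N → Fin (k + 1) := fun s => ⟨T s, by
    have := hTk s (by omega); omega⟩
  have hτ : Function.Injective τ := by
    intro a b hab
    have heq : T a = T b := congrArg Fin.val hab
    by_contra hne
    rcases lt_trichotomy (a : ℕ) (b : ℕ) with h | h | h
    · have := hTlt a b h (by omega); omega
    · exact hne (Fin.ext h)
    · have := hTlt b a h (by omega); omega
  refine hasSummandIso_pi (fun t : Fin (k + 1) => M t)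
    (fun i : Fin N => FU ⧸ Ideal.span {(X : FU) ^ ((i : ℕ) + 1)}) τ hτ ?_
  intro s
  exact hexact (T s) (hTk s (by omega)) s (hTQ s (by omega)) (hTnot s (by omega))
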